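/- The algebra 𝔸 of eventually flat functions separates points of the completion Ḡ if and only if Ḡ is weakly connected. Moreover, when Ḡ is weakly connected, for distinct x,y ∈ Ḡ there is φ ∈ 𝔸 with range {0,1}, with φ ≡ 0 on an open neighborhood of x and φ ≡ 1 on an open neighborhood of y. -/

import Mathlib

open UniformSpace Filter Topology
open scoped ENNReal

noncomputable section

/-- A locally finite edge-weighted (resistance) graph. -/
structure WGraph (V : Type*) where
  Adj : V → V → Prop
  symm : ∀ u v, Adj u v → Adj v u
  loopless : ∀ v, ¬ Adj v v
  R : V → V → ℝ
  Rsymm : ∀ u v, R u v = R v u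
  Rpos : ∀ u v, Adj u v → 0 < R u v
  locFin : ∀ v, {u | Adj u v}.Finite

namespace WGraph

variable {V : Type*} (G : WGraph V)

/-- The set of edges, as unordered pairs of vertices. -/
def edgeSet : Set (Sym2 V) := {e | ∃ u v, G.Adj u v ∧ e = s(u, v)}

/-- The set of total lengths of finite paths joining `u` to `v`. -/
def pathLengths (u v : V) : Set ℝ :=
  {L | ∃ (n : ℕ) (p : ℕ → V), p 0 = u ∧ p n = v ∧
        (∀ k < n, G.Adj (p k) (p (k + 1))) ∧
        L = ∑ k ∈ Finset.range n, G.R (p k) (p (k + 1))}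

/-- `G` is connected: any two vertices are joined by a finite path. -/
def Connected : Prop := ∀ u v : V, (G.pathLengths u v).Nonempty

/-- The metric on the vertex set is the minimal resistance path metric of `G`. -/
def IsPathMetric [MetricSpace V] : Prop :=
  ∀ u v : V, dist u v = sInf (G.pathLengths u v)

/-- Eventually flat functions: the values differ across only finitely many edges. -/
def EventuallyFlat (φ : V → ℝ) : Prop :=
  {p : V × V | G.Adj p.1 p.2 ∧ φ p.1 ≠ φ p.2}.Finite

open Classical in
/-- The conductance: the reciprocal resistance on edges, `0` off edges. -/
def cond (u v : V) : ℝ := if G.Adj u v then (G.R u v)⁻¹ else 0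

/-- `f` is harmonic at `v`: its value is the conductance-weighted average of the
values at the adjacent vertices. -/
def HarmonicAt (f : V → ℝ) (v : V) : Prop :=
  f v = (∑ u ∈ (G.locFin v).toFinset, G.cond u v)⁻¹ *
          ∑ u ∈ (G.locFin v).toFinset, G.cond u v * f u

/-- The weighted `ℓ²(μ)` inner product. -/
def winner (μ : V → ℝ) (f g : V → ℝ) : ℝ := ∑' v, f v * g v * μ v

/-- The bilinear (energy) form associated to conductances `C`. -/
def Bform (C : V → V → ℝ) (f g : V → ℝ) : ℝ :=
  (1 / 2) * ∑' p : V × V, C p.1 p.2 * (f p.1 - f p.2) * (g p.1 - g p.2)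

/-- The formal Laplacian `Δ_μ`. -/
def lap (C : V → V → ℝ) (μ : V → ℝ) (f : V → ℝ) (v : V) : ℝ :=
  (1 / μ v) * ∑' u, C u v * (f v - f u)

/-- The (possibly infinite) energy of `f`. -/
def energy (C : V → V → ℝ) (f : V → ℝ) : ℝ≥0∞ :=
  (1 / 2) * ∑' p : V × V, ENNReal.ofReal (C p.1 p.2 * (f p.1 - f p.2) ^ 2)

variable [MetricSpace V]

/-- A path in the completion `Ḡ` joining `x` and `y`: a two-sided sequence of
vertices (stationary steps are allowed, so this encodes finite paths, rays and
double rays) converging to `x` and `y` at its two ends. -/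
structure CPath (x y : Completion V) where
  p : ℤ → V
  step : ∀ k, p k = p (k + 1) ∨ G.Adj (p k) (p (k + 1))
  tendsto_left : Tendsto (fun n : ℕ => ((p (-(n : ℤ)) : V) : Completion V)) atTop (nhds x)
  tendsto_right : Tendsto (fun n : ℕ => ((p (n : ℤ) : V) : Completion V)) atTop (nhds y)

end WGraph

/-- The path `γ` uses (contains) the edge `e`. -/
def WGraph.CPath.uses {V : Type*} [MetricSpace V] {G : WGraph V}
    {x y : Completion V} (γ : G.CPath x y) (e : Sym2 V) : Prop :=
  ∃ k : ℤ, γ.p k ≠ γ.p (k + 1) ∧ e = s(γ.p k, γ.p (k + 1))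

namespace WGraph

variable {V : Type*} (G : WGraph V) [MetricSpace V]

/-- The completion `Ḡ` is weakly connected: any two distinct points admit a
finite set of edges met by every path joining them. -/
def WeaklyConnected : Prop :=
  ∀ x y : Completion V, x ≠ y →
    ∃ W : Set (Sym2 V), W.Finite ∧ W ⊆ G.edgeSet ∧
      ∀ γ : G.CPath x y, ∃ e ∈ W, γ.uses e

end WGraph
namespace WGraph

variable {V : Type*} [MetricSpace V] (G : WGraph V)

/-- A step of a path that avoids the edge set `W`: either stationary, or an
edge not in `W`. -/
def AStep (W : Set (Sym2 V)) (u v : V) : Prop :=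
  u = v ∨ (G.Adj u v ∧ s(u, v) ∉ W)

lemma AStep.symm2 {G : WGraph V} {W : Set (Sym2 V)} {u v : V}
    (h : G.AStep W u v) : G.AStep W v u := by
  rcases h with h | ⟨h1, h2⟩
  · exact Or.inl h.symm
  · exact Or.inr ⟨G.symm _ _ h1, by rwa [Sym2.eq_swap]⟩

/-- There is a ray from `v`, avoiding `W`, converging to `y` in the completion. -/
def RayTo (W : Set (Sym2 V)) (y : Completion V) (v : V) : Prop :=
  ∃ p : ℕ → V, p 0 = v ∧ (∀ k, G.AStep W (p k) (p (k + 1))) ∧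
    Tendsto (fun n => ((p n : V) : Completion V)) atTop (nhds y)

lemma pathLengths_nonneg {u v : V} {L : ℝ} (hL : L ∈ G.pathLengths u v) : 0 ≤ L := by
  obtain ⟨n, p, _, _, hadj, rfl⟩ := hL
  exact Finset.sum_nonneg fun k hk =>
    le_of_lt (G.Rpos _ _ (hadj k (Finset.mem_range.mp hk)))

lemma dist_le_pathSum (hmet : G.IsPathMetric) {n : ℕ} {q : ℕ → V}
    (hadj : ∀ k < n, G.Adj (q k) (q (k + 1))) {i : ℕ} (hi : i ≤ n) :
    dist (q 0) (q i) ≤ ∑ k ∈ Finset.range n, G.R (q k) (q (k + 1)) := by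
  have hmem : (∑ k ∈ Finset.range i, G.R (q k) (q (k + 1))) ∈ G.pathLengths (q 0) (q i) :=
    ⟨i, q, rfl, rfl, fun k hk => hadj k (lt_of_lt_of_le hk hi), rfl⟩
  have h1 : dist (q 0) (q i) ≤ ∑ k ∈ Finset.range i, G.R (q k) (q (k + 1)) := by
    rw [hmet]
    exact csInf_le ⟨0, fun L hL => G.pathLengths_nonneg hL⟩ hmem
  refine h1.trans (Finset.sum_le_sum_of_subset_of_nonneg (Finset.range_subset_range.mpr hi) ?_)
  intro k hk _
  exact le_of_lt (G.Rpos _ _ (hadj k (Finset.mem_range.mp hk)))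

lemma exists_apath (hmet : G.IsPathMetric) (hconn : G.Connected)
    {W : Set (Sym2 V)} {r c : ℝ}
    (hrW : ∀ u v : V, s(u, v) ∈ W → r ≤ G.R u v) (hcr : c ≤ r)
    {u v : V} (hd : dist u v < c) :
    ∃ (n : ℕ) (q : ℕ → V), q 0 = u ∧ q n = v ∧
      (∀ k < n, G.Adj (q k) (q (k + 1)) ∧ s(q k, q (k + 1)) ∉ W) ∧
      ∑ k ∈ Finset.range n, G.R (q k) (q (k + 1)) < c := by
  have hne := hconn u v
  have hlt : sInf (G.pathLengths u v) < c := (hmet u v) ▸ hd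
  obtain ⟨L, hLmem, hLlt⟩ := exists_lt_of_csInf_lt hne hlt
  obtain ⟨n, q, h0, hn, hadj, rfl⟩ := hLmem
  refine ⟨n, q, h0, hn, fun k hk => ⟨hadj k hk, ?_⟩, hLlt⟩
  intro hkW
  have h1 : r ≤ G.R (q k) (q (k + 1)) := hrW _ _ hkW
  have h2 : G.R (q k) (q (k + 1)) ≤ ∑ j ∈ Finset.range n, G.R (q j) (q (j + 1)) :=
    Finset.single_le_sum
      (fun j hj => le_of_lt (G.Rpos _ _ (hadj j (Finset.mem_range.mp hj))))
      (Finset.mem_range.mpr hk)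
  linarith

end WGraph
namespace WGraph

variable {V : Type*} [MetricSpace V] (G : WGraph V)

lemma rayTo_of_close (hmet : G.IsPathMetric) (hconn : G.Connected)
    {W : Set (Sym2 V)} {r : ℝ} (hr0 : 0 < r)
    (hrW : ∀ u v : V, s(u, v) ∈ W → r ≤ G.R u v)
    {y : Completion V} {v : V} (hv : dist ((v : V) : Completion V) y < r / 2) :
    G.RayTo W y v := by
  classical
  -- choose a sequence of vertices rapidly converging to y
  have hdense := UniformSpace.Completion.denseRange_coe (α := V)
  have hch : ∀ n : ℕ, ∃ u : V, dist ((u : V) : Completion V) y < r / 2 ^ (n + 1) := by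
    intro n
    obtain ⟨u, hu⟩ := hdense.exists_dist_lt y (show (0:ℝ) < r / 2 ^ (n + 1) by positivity)
    exact ⟨u, by rwa [dist_comm] at hu⟩
  choose w' hw' using hch
  set w : ℕ → V := fun n => if n = 0 then v else w' n with hwdef
  have hwy : ∀ n, dist ((w n : V) : Completion V) y < r / 2 ^ (n + 1) := by
    intro n
    rcases eq_or_ne n 0 with h0 | h0
    · subst h0; simpa [w] using hv
    · simpa [w, h0] using hw' n
  -- short avoiding paths between consecutive vertices
  have hblk : ∀ n : ℕ, ∃ (m : ℕ) (q : ℕ → V), q 0 = w n ∧ q m = w (n + 1) ∧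
      (∀ k < m, G.Adj (q k) (q (k + 1)) ∧ s(q k, q (k + 1)) ∉ W) ∧
      ∑ k ∈ Finset.range m, G.R (q k) (q (k + 1)) < r / 2 ^ n := by
    intro n
    have hcr : r / 2 ^ n ≤ r :=
      div_le_self hr0.le (one_le_pow₀ (by norm_num : (1:ℝ) ≤ 2))
    have hd : dist (w n) (w (n + 1)) < r / 2 ^ n := by
      have h1 := hwy n
      have h2 := hwy (n + 1)
      have hA : (0:ℝ) < r / 2 ^ n := by positivity
      have e1 : r / 2 ^ (n + 1) = r / 2 ^ n / 2 := by rw [pow_succ]; ring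
      have e2 : r / 2 ^ (n + 1 + 1) = r / 2 ^ n / 2 / 2 := by
        rw [pow_succ, pow_succ]; ring
      have hiso : dist (w n) (w (n + 1)) =
          dist ((w n : V) : Completion V) ((w (n + 1) : V) : Completion V) :=
        (UniformSpace.Completion.coe_isometry.dist_eq _ _).symm
      have htri : dist ((w n : V) : Completion V) ((w (n + 1) : V) : Completion V) ≤
          dist ((w n : V) : Completion V) y + dist ((w (n+1) : V) : Completion V) y := by
        rw [dist_comm ((w (n+1) : V) : Completion V) y]
        exact dist_triangle _ _ _
      rw [hiso]
      rw [e1] at h1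
      rw [e2] at h2
      linarith
    exact G.exists_apath hmet hconn hrW hcr hd
  choose m q hq0 hqm hqadj hqsum using hblk
  -- glue the blocks
  set s : ℕ → ℕ := fun n => ∑ k ∈ Finset.range n, (m k + 1) with hsdef
  have hs0 : s 0 = 0 := by simp [s]
  have hssucc : ∀ n, s (n + 1) = s n + (m n + 1) := fun n => Finset.sum_range_succ _ n
  have hsmono : StrictMono s := strictMono_nat_of_lt_succ fun n => by
    rw [hssucc]; omega
  have hsge : ∀ n, n ≤ s n := fun n => by
    calc n = ∑ k ∈ Finset.range n, 1 := by simp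
    _ ≤ s n := Finset.sum_le_sum fun k _ => by omega
  set blk : ℕ → ℕ := fun t => Nat.findGreatest (fun n => s n ≤ t) t with hblkdef
  have hblk_le : ∀ t, s (blk t) ≤ t := fun t =>
    Nat.findGreatest_spec (P := fun n => s n ≤ t) (Nat.zero_le t) (by simp [hs0])
  have hblk_lt : ∀ t, t < s (blk t + 1) := by
    intro t
    by_contra h
    push_neg at h
    exact Nat.findGreatest_is_greatest (P := fun n => s n ≤ t) (Nat.lt_succ_self _)
      (le_trans (hsge _) h) h
  have hblk_eq : ∀ {b t : ℕ}, s b ≤ t → t < s (b + 1) → blk t = b := by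
    intro b t h1 h2
    refine le_antisymm ?_ (Nat.le_findGreatest (le_trans (hsge b) h1) h1)
    by_contra h
    push_neg at h
    have : s (b + 1) ≤ s (blk t) := hsmono.monotone h
    exact absurd (le_trans this (hblk_le t)) (not_le.mpr h2)
  set p : ℕ → V := fun t => q (blk t) (t - s (blk t)) with hpdef
  have hps : ∀ n, p (s n) = w n := by
    intro n
    have h : blk (s n) = n := hblk_eq le_rfl (by rw [hssucc]; omega)
    simp [p, h, hq0]
  refine ⟨p, by simpa [hs0, w] using hps 0, ?_, ?_⟩
  · -- steps
    intro t
    obtain ⟨b, hb⟩ : ∃ b, blk t = b := ⟨_, rfl⟩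
    have h1 : s b ≤ t := hb ▸ hblk_le t
    have h2 : t < s (b + 1) := hb ▸ hblk_lt t
    rw [hssucc] at h2
    have him : t - s b ≤ m b := by omega
    have hpt : p t = q b (t - s b) := by simp only [p, hb]
    rcases lt_or_eq_of_le him with hlt | heq
    · have hblk1 : blk (t + 1) = b := hblk_eq (by omega) (by rw [hssucc]; omega)
      have hpt1 : p (t + 1) = q b (t - s b + 1) := by
        simp only [p, hblk1]
        congr 1
        omega
      rw [hpt, hpt1]
      exact Or.inr (hqadj b _ hlt)
    · -- stationary step to the next block
      have ht1 : t + 1 = s (b + 1) := by rw [hssucc]; omega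
      have hpt1 : p (t + 1) = w (b + 1) := by rw [ht1]; exact hps (b + 1)
      rw [hpt, hpt1, heq, hqm]
      exact Or.inl rfl
  · -- convergence
    have hbound : ∀ t, dist ((p t : V) : Completion V) y ≤
        r / 2 ^ (blk t) + r / 2 ^ (blk t + 1) := by
      intro t
      obtain ⟨b, hb⟩ : ∃ b, blk t = b := ⟨_, rfl⟩
      have h1 : s b ≤ t := hb ▸ hblk_le t
      have h2 : t < s (b + 1) := hb ▸ hblk_lt t
      rw [hssucc] at h2
      have him : t - s b ≤ m b := by omega
      have hpt : p t = q b (t - s b) := by simp only [p, hb]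
      rw [hb, hpt]
      have hd1 : dist (q b (t - s b)) (w b) ≤ r / 2 ^ b := by
        have hle := G.dist_le_pathSum hmet (n := m b) (q := q b)
          (fun k hk => (hqadj b k hk).1) him
        rw [hq0] at hle
        rw [dist_comm]
        exact le_trans hle (le_of_lt (hqsum b))
      have h2y := hwy b
      have hiso : dist ((q b (t - s b) : V) : Completion V) ((w b : V) : Completion V)
          = dist (q b (t - s b)) (w b) :=
        UniformSpace.Completion.coe_isometry.dist_eq _ _
      calc dist ((q b (t - s b) : V) : Completion V) y
          ≤ dist ((q b (t - s b) : V) : Completion V) ((w b : V) : Completion V) +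
            dist ((w b : V) : Completion V) y := dist_triangle _ _ _
        _ ≤ r / 2 ^ b + r / 2 ^ (b + 1) := by
            rw [hiso]; exact add_le_add hd1 (le_of_lt h2y)
    have hblktop : Tendsto blk atTop atTop := by
      rw [tendsto_atTop_atTop]
      intro N
      exact ⟨s N, fun t ht => Nat.le_findGreatest (le_trans (hsge N) ht) ht⟩
    have hg : Tendsto (fun n : ℕ => r / 2 ^ n + r / 2 ^ (n + 1)) atTop (nhds 0) := by
      have h12 : Tendsto (fun n : ℕ => ((1:ℝ)/2) ^ n) atTop (nhds 0) :=
        tendsto_pow_atTop_nhds_zero_of_lt_one (by norm_num) (by norm_num)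
      have hh := (h12.const_mul r).add (h12.const_mul (r / 2))
      rw [mul_zero, mul_zero, add_zero] at hh
      refine hh.congr fun n => ?_
      rw [pow_succ]
      rw [div_pow, one_pow]
      field_simp
    rw [tendsto_iff_dist_tendsto_zero]
    exact squeeze_zero (fun t => dist_nonneg) hbound (hg.comp hblktop)

end WGraph
namespace WGraph

variable {V : Type*} [MetricSpace V] (G : WGraph V)

lemma rayTo_step {W : Set (Sym2 V)} {y : Completion V} {u v : V}
    (h : G.AStep W u v) (hv : G.RayTo W y v) : G.RayTo W y u := by
  obtain ⟨p, hp0, hstep, hlim⟩ := hv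
  refine ⟨fun n => if n = 0 then u else p (n - 1), by simp, ?_, ?_⟩
  · intro k
    rcases eq_or_ne k 0 with rfl | hk
    · simpa [hp0] using h
    · have h1 : k - 1 + 1 = k := by omega
      simpa [hk, h1] using hstep (k - 1)
  · have hl : Tendsto (fun n : ℕ => ((p (n - 1) : V) : Completion V)) atTop (nhds y) :=
      hlim.comp (tendsto_sub_atTop_nat 1)
    refine hl.congr' ?_
    filter_upwards [eventually_ge_atTop 1] with n hn
    have : n ≠ 0 := by omega
    simp [this]

lemma rayTo_congr {W : Set (Sym2 V)} {y : Completion V} {u v : V}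
    (h : G.AStep W u v) : (G.RayTo W y u ↔ G.RayTo W y v) :=
  ⟨G.rayTo_step h.symm2, G.rayTo_step h⟩

lemma rayTo_chain {W : Set (Sym2 V)} {y : Completion V} {n : ℕ} {q : ℕ → V}
    (h : ∀ k < n, G.AStep W (q k) (q (k + 1))) :
    (G.RayTo W y (q 0) ↔ G.RayTo W y (q n)) := by
  induction n with
  | zero => rfl
  | succ n ih =>
      rw [ih (fun k hk => h k (hk.trans (Nat.lt_succ_self n)))]
      exact G.rayTo_congr (h n (Nat.lt_succ_self n))

lemma exists_cpath_of_rays {W : Set (Sym2 V)} {x y : Completion V} {v : V}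
    (hx : G.RayTo W x v) (hy : G.RayTo W y v) :
    ∃ γ : G.CPath x y, ∀ e ∈ W, ¬ γ.uses e := by
  obtain ⟨a, ha0, hastep, halim⟩ := hx
  obtain ⟨b, hb0, hbstep, hblim⟩ := hy
  classical
  set p : ℤ → V := fun k => if 0 ≤ k then b k.toNat else a (-k).toNat with hpdef
  have hstep : ∀ k : ℤ, G.AStep W (p k) (p (k + 1)) := by
    intro k
    rcases le_or_gt 0 k with hk | hk
    · have hk1 : (0:ℤ) ≤ k + 1 := by omega
      have ht : (k + 1).toNat = k.toNat + 1 := by omega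
      simp only [p, if_pos hk, if_pos hk1, ht]
      exact hbstep k.toNat
    · -- k < 0
      have hpk : p k = a (-k).toNat := by simp only [p, if_neg (by omega : ¬ (0:ℤ) ≤ k)]
      have hpk1 : p (k + 1) = a (-(k + 1)).toNat := by
        rcases eq_or_ne (k + 1) 0 with h0 | h0
        · rw [h0]
          simp only [p, if_pos le_rfl]
          norm_num [hb0, ha0]
        · simp only [p, if_neg (by omega : ¬ (0:ℤ) ≤ k + 1)]
      have ht : (-k).toNat = (-(k + 1)).toNat + 1 := by omega
      rw [hpk, hpk1, ht]
      exact (hastep (-(k + 1)).toNat).symm2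
  refine ⟨⟨p, fun k => (hstep k).imp id And.left, ?_, ?_⟩, ?_⟩
  · refine halim.congr fun n => ?_
    rcases eq_or_ne n 0 with rfl | hn
    · simp [p, ha0, hb0]
    · have : ¬ (0:ℤ) ≤ -(n:ℤ) := by omega
      simp only [p, if_neg this]
      norm_num
  · refine hblim.congr fun n => ?_
    simp [p]
  · rintro e heW ⟨k, hne, rfl⟩
    rcases hstep k with h | ⟨_, hnW⟩
    · exact hne h
    · exact hnW heW

lemma flat_of_subset {W : Set (Sym2 V)} (hW : W.Finite) {φ : V → ℝ}
    (h : ∀ u v : V, G.Adj u v → φ u ≠ φ v → s(u, v) ∈ W) : G.EventuallyFlat φ := by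
  have hfin : (⋃ e ∈ W, {pr : V × V | s(pr.1, pr.2) = e}).Finite := by
    refine hW.biUnion fun e _ => ?_
    induction e using Sym2.ind with
    | _ a b =>
      refine Set.Finite.subset
        ((Set.finite_singleton (a, b)).insert (b, a)) ?_
      rintro ⟨u, w⟩ huw
      simp only [Set.mem_setOf_eq, Sym2.eq_iff] at huw
      rcases huw with ⟨rfl, rfl⟩ | ⟨rfl, rfl⟩
      · simp
      · simp
  refine hfin.subset ?_
  rintro ⟨u, w⟩ ⟨hadj, hne⟩
  exact Set.mem_biUnion (h u w hadj hne) rfl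

end WGraph
namespace WGraph

variable {V : Type*} [MetricSpace V] (G : WGraph V)

lemma key_separation (hmet : G.IsPathMetric) (hconn : G.Connected)
    (hwc : G.WeaklyConnected) :
    ∀ x y : Completion V, x ≠ y →
      ∃ (φ : V → ℝ) (Φ : Completion V → ℝ),
        G.EventuallyFlat φ ∧ Continuous Φ ∧ (∀ v : V, Φ ↑v = φ v) ∧
        Set.range Φ ⊆ {0, 1} ∧
        (∀ᶠ z in nhds x, Φ z = 0) ∧ (∀ᶠ z in nhds y, Φ z = 1) := by
  intro x y hxy
  obtain ⟨W, hWfin, hWedge, hWuse⟩ := hwc x y hxy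
  classical
  -- a uniform positive lower bound for the resistances of edges in W
  obtain ⟨r, hr0, hrW⟩ : ∃ r : ℝ, 0 < r ∧ ∀ u v : V, s(u, v) ∈ W → r ≤ G.R u v := by
    set F := hWfin.toFinset with hF
    rcases F.eq_empty_or_nonempty with hFe | hFne
    · refine ⟨1, one_pos, fun u v huv => absurd ?_ (Finset.notMem_empty s(u, v))⟩
      rw [← hFe]
      exact hWfin.mem_toFinset.mpr huv
    · set Rf : Sym2 V → ℝ := Sym2.lift ⟨G.R, G.Rsymm⟩ with hRf
      refine ⟨F.inf' hFne Rf, ?_, ?_⟩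
      · rw [Finset.lt_inf'_iff]
        intro e he
        obtain ⟨u, v, huv, rfl⟩ := hWedge (hWfin.mem_toFinset.mp he)
        simpa [Rf] using G.Rpos u v huv
      · intro u v huv
        have h := Finset.inf'_le (b := s(u, v)) Rf (hWfin.mem_toFinset.mpr huv)
        simp only [Rf, Sym2.lift_mk] at h
        exact h
  set D : Set V := {v | G.RayTo W y v} with hD
  set φ : V → ℝ := fun v => if v ∈ D then 1 else 0 with hφ
  have hindic : ∀ u v : V, (u ∈ D ↔ v ∈ D) → φ u = φ v := by
    intro u v hiff
    simp only [φ]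
    by_cases hu : u ∈ D
    · rw [if_pos hu, if_pos (hiff.mp hu)]
    · rw [if_neg hu, if_neg (fun hv => hu (hiff.mpr hv))]
  -- vertices close to y are in D, vertices close to x are not
  have hnearY : ∀ v : V, dist ((v : V) : Completion V) y < r / 2 → v ∈ D :=
    fun v hv => G.rayTo_of_close hmet hconn hr0 hrW hv
  have hnearX : ∀ v : V, dist ((v : V) : Completion V) x < r / 2 → v ∉ D := by
    intro v hv hvD
    have hxray : G.RayTo W x v := G.rayTo_of_close hmet hconn hr0 hrW hv
    obtain ⟨γ, hγ⟩ := G.exists_cpath_of_rays hxray hvD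
    obtain ⟨e, heW, heuse⟩ := hWuse γ
    exact hγ e heW heuse
  -- φ is constant at scale r
  have hscale : ∀ u v : V, dist u v < r → φ u = φ v := by
    intro u v huv
    obtain ⟨n, q, h0, hn, hadj, _⟩ := G.exists_apath hmet hconn hrW le_rfl huv
    refine hindic u v ?_
    rw [← h0, ← hn, hD]
    exact G.rayTo_chain (fun k hk => Or.inr (hadj k hk))
  have hunif : UniformContinuous φ := by
    rw [Metric.uniformContinuous_iff]
    intro ε hε
    exact ⟨r, hr0, fun a b hab => by rw [hscale a b hab]; simpa using hε⟩
  -- φ is eventually flat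
  have hflat : G.EventuallyFlat φ := by
    refine G.flat_of_subset hWfin ?_
    intro u v hadj hne
    by_contra hW
    exact hne (hindic u v (G.rayTo_congr (W := W) (y := y) (Or.inr ⟨hadj, hW⟩)))
  set Φ : Completion V → ℝ := Completion.extension φ with hΦ
  have hΦcont : Continuous Φ := Completion.continuous_extension
  have hΦcoe : ∀ v : V, Φ ↑v = φ v := fun v => Completion.extension_coe hunif v
  refine ⟨φ, Φ, hflat, hΦcont, hΦcoe, ?_, ?_, ?_⟩
  · -- range
    rintro t ⟨z, rfl⟩
    have hz : z ∈ closure (Set.range ((↑) : V → Completion V)) := by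
      rw [UniformSpace.Completion.denseRange_coe.closure_range]
      trivial
    have : Φ z ∈ closure ({0, 1} : Set ℝ) := by
      refine map_mem_closure hΦcont hz ?_
      rintro _ ⟨v, rfl⟩
      rw [hΦcoe v]
      by_cases hv : v ∈ D <;> simp [φ, hv]
    rwa [IsClosed.closure_eq ((Set.finite_singleton (1:ℝ)).insert 0).isClosed] at this
  · -- vanishes near x
    have hball : Metric.ball x (r / 2) ∈ nhds x := Metric.ball_mem_nhds x (by positivity)
    filter_upwards [hball] with z hz
    have hdense : Dense (Set.range ((↑) : V → Completion V)) :=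
      UniformSpace.Completion.denseRange_coe
    have hsub : Metric.ball x (r / 2) ⊆
        closure (Metric.ball x (r / 2) ∩ Set.range ((↑) : V → Completion V)) :=
      Dense.open_subset_closure_inter hdense Metric.isOpen_ball
    have : Φ z ∈ closure ({0} : Set ℝ) := by
      refine map_mem_closure hΦcont (hsub hz) ?_
      rintro _ ⟨hmem, v, rfl⟩
      rw [Metric.mem_ball] at hmem
      rw [hΦcoe v]
      simp [φ, hnearX v hmem]
    rwa [closure_singleton, Set.mem_singleton_iff] at this
  · -- equals one near y
    have hball : Metric.ball y (r / 2) ∈ nhds y := Metric.ball_mem_nhds y (by positivity)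
    filter_upwards [hball] with z hz
    have hdense : Dense (Set.range ((↑) : V → Completion V)) :=
      UniformSpace.Completion.denseRange_coe
    have hsub : Metric.ball y (r / 2) ⊆
        closure (Metric.ball y (r / 2) ∩ Set.range ((↑) : V → Completion V)) :=
      Dense.open_subset_closure_inter hdense Metric.isOpen_ball
    have : Φ z ∈ closure ({1} : Set ℝ) := by
      refine map_mem_closure hΦcont (hsub hz) ?_
      rintro _ ⟨hmem, v, rfl⟩
      rw [Metric.mem_ball] at hmem
      rw [hΦcoe v]
      simp [φ, hnearY v hmem]
    rwa [closure_singleton, Set.mem_singleton_iff] at this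

end WGraph
/-- the eventually flat functions separate the points of the
completion iff the completion is weakly connected; in the weakly connected case
the separating function can be taken with range `{0,1}`, vanishing near one
point and equal to `1` near the other. -/
theorem separation_iff_weaklyConnected {V : Type*} [MetricSpace V] [Countable V]
    (G : WGraph V) (hmet : G.IsPathMetric) (hconn : G.Connected) :
    ((∀ x y : UniformSpace.Completion V, x ≠ y →
        ∃ (φ : V → ℝ) (Φ : UniformSpace.Completion V → ℝ),
          G.EventuallyFlat φ ∧ Continuous Φ ∧ (∀ v : V, Φ ↑v = φ v) ∧ Φ x ≠ Φ y) ↔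
      G.WeaklyConnected) ∧
    (G.WeaklyConnected → ∀ x y : UniformSpace.Completion V, x ≠ y →
      ∃ (φ : V → ℝ) (Φ : UniformSpace.Completion V → ℝ),
        G.EventuallyFlat φ ∧ Continuous Φ ∧ (∀ v : V, Φ ↑v = φ v) ∧
        Set.range Φ ⊆ {0, 1} ∧
        (∀ᶠ z in nhds x, Φ z = 0) ∧ (∀ᶠ z in nhds y, Φ z = 1)) := by
  have key := G.key_separation hmet hconn
  refine ⟨⟨?_, ?_⟩, fun hwc => key hwc⟩
  · -- separation → weakly connected
    intro hsep x y hxy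
    obtain ⟨φ, Φ, hflat, hΦc, hΦcoe, hne⟩ := hsep x y hxy
    refine ⟨(fun p : V × V => s(p.1, p.2)) '' {p : V × V | G.Adj p.1 p.2 ∧ φ p.1 ≠ φ p.2},
      hflat.image _, ?_, ?_⟩
    · rintro e ⟨⟨u, v⟩, ⟨hadj, _⟩, rfl⟩
      exact ⟨u, v, hadj, rfl⟩
    · intro γ
      by_contra h
      push_neg at h
      -- φ is constant along γ
      have hstepeq : ∀ k : ℤ, φ (γ.p k) = φ (γ.p (k + 1)) := by
        intro k
        rcases γ.step k with heq | hadj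
        · rw [heq]
        · by_contra hneq
          have hmem : s(γ.p k, γ.p (k + 1)) ∈
              (fun p : V × V => s(p.1, p.2)) '' {p : V × V | G.Adj p.1 p.2 ∧ φ p.1 ≠ φ p.2} :=
            ⟨(γ.p k, γ.p (k + 1)), ⟨hadj, hneq⟩, rfl⟩
          have hpne : γ.p k ≠ γ.p (k + 1) := fun he => hneq (by rw [he])
          exact h _ hmem ⟨k, hpne, rfl⟩
      have hconst : ∀ k : ℤ, φ (γ.p k) = φ (γ.p 0) := by
        intro k
        induction k using Int.induction_on with
        | zero => rfl
        | succ i ih => rw [← hstepeq i, ih]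
        | pred i ih =>
            have hs := hstepeq (-(i:ℤ) - 1)
            rw [show (-(i:ℤ) - 1 + 1) = -(i:ℤ) by ring] at hs
            rw [hs, ih]
      have hxval : Φ x = φ (γ.p 0) := by
        have h1 : Tendsto (fun n : ℕ => Φ ((γ.p (-(n:ℤ)) : V) : UniformSpace.Completion V))
            atTop (nhds (Φ x)) := (hΦc.tendsto x).comp γ.tendsto_left
        have h2 : (fun n : ℕ => Φ ((γ.p (-(n:ℤ)) : V) : UniformSpace.Completion V)) =
            fun _ : ℕ => φ (γ.p 0) := by
          funext n
          rw [hΦcoe, hconst]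
        rw [h2] at h1
        exact (tendsto_nhds_unique h1 tendsto_const_nhds)
      have hyval : Φ y = φ (γ.p 0) := by
        have h1 : Tendsto (fun n : ℕ => Φ ((γ.p (n:ℤ) : V) : UniformSpace.Completion V))
            atTop (nhds (Φ y)) := (hΦc.tendsto y).comp γ.tendsto_right
        have h2 : (fun n : ℕ => Φ ((γ.p (n:ℤ) : V) : UniformSpace.Completion V)) =
            fun _ : ℕ => φ (γ.p 0) := by
          funext n
          rw [hΦcoe, hconst]
        rw [h2] at h1
        exact (tendsto_nhds_unique h1 tendsto_const_nhds)
      exact hne (hxval.trans hyval.symm)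
  · -- weakly connected → separation
    intro hwc x y hxy
    obtain ⟨φ, Φ, hflat, hΦc, hΦcoe, _, hx0, hy1⟩ := key hwc x y hxy
    refine ⟨φ, Φ, hflat, hΦc, hΦcoe, ?_⟩
    rw [hx0.self_of_nhds, hy1.self_of_nhds]
    norm_num
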